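/- Let ξ₁ and ξ₂ be centered jointly Gaussian real random variables on a probability space (i.e., the law of the random vector (ξ₁,ξ₂) on ℝ² is a centered Gaussian measure), let q ≥ 1, and set L = max(E[ξ₁²], E[ξ₂²]). Then there exists a constant C depending only on L and q such that E[|e^{ξ₁} − e^{ξ₂}|^{2q}] ≤ C (E[(ξ₁ − ξ₂)²])^q. -/

import Mathlib

open MeasureTheory ProbabilityTheory NNReal

namespace Stmt13Aux

open Real

/-- exp(t·x) is integrable against the standard Gaussian. -/
lemma integrable_exp_mul_gauss (t : ℝ) :
    Integrable (fun x => Real.exp (t * x)) (gaussianReal 0 1) := by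
  rw [gaussianReal_of_var_ne_zero _ one_ne_zero,
    integrable_withDensity_iff (measurable_gaussianPDF _ _)
      (ae_of_all _ fun x => ENNReal.ofReal_lt_top)]
  have heq : (fun x => Real.exp (t * x) * (gaussianPDF 0 1 x).toReal)
      = fun x => ((Real.sqrt (2 * π))⁻¹ * Real.exp (t ^ 2 / 2))
          * Real.exp (-(1/2) * (x - t) ^ 2) := by
    funext x
    rw [gaussianPDF, ENNReal.toReal_ofReal (gaussianPDFReal_nonneg _ _ _), gaussianPDFReal]
    simp only [NNReal.coe_one, mul_one, sub_zero]
    rw [mul_comm (Real.exp (t * x)), mul_assoc, mul_assoc, ← Real.exp_add, ← Real.exp_add]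
    congr 1
    ring
  rw [heq]
  exact ((integrable_exp_neg_mul_sq (by norm_num : (0:ℝ) < 1/2)).comp_sub_right t).const_mul _

lemma integrable_exp_add_gauss (s : ℝ) :
    Integrable (fun x => Real.exp (s * x) + Real.exp (-s * x)) (gaussianReal 0 1) :=
  (integrable_exp_mul_gauss s).add (integrable_exp_mul_gauss (-s))

lemma abs_rpow_le_bound {p : ℝ} (hp : 0 ≤ p) (x : ℝ) :
    |x| ^ p ≤ 1 + (Real.exp (p * x) + Real.exp (-p * x)) := by
  have h1 : (0:ℝ) < Real.exp (p * x) := Real.exp_pos _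
  have h2 : (0:ℝ) < Real.exp (-p * x) := Real.exp_pos _
  rcases le_total |x| 1 with h | h
  · have : |x| ^ p ≤ 1 := Real.rpow_le_one (abs_nonneg x) h hp
    linarith
  · have hx0 : (0:ℝ) < |x| := lt_of_lt_of_le one_pos h
    have hlog : Real.log |x| ≤ |x| := by
      have := Real.log_le_sub_one_of_pos hx0
      linarith
    have h3 : |x| ^ p ≤ Real.exp (p * |x|) := by
      rw [← Real.exp_log (Real.rpow_pos_of_pos hx0 p), Real.log_rpow hx0]
      exact Real.exp_le_exp.2 (by nlinarith)
    have h4 : Real.exp (p * |x|) ≤ Real.exp (p * x) + Real.exp (-p * x) := by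
      rcases le_total 0 x with hx | hx
      · rw [abs_of_nonneg hx]; linarith
      · rw [abs_of_nonpos hx, show p * -x = -p * x by ring]; linarith
    linarith

lemma integrable_rpow_abs_gauss {p : ℝ} (hp : 0 ≤ p) :
    Integrable (fun x => |x| ^ p) (gaussianReal 0 1) := by
  refine Integrable.mono' ((integrable_const 1).add (integrable_exp_add_gauss p))
    ((continuous_abs.rpow_const fun _ => Or.inr hp).measurable.aestronglyMeasurable)
    (ae_of_all _ fun x => ?_)
  rw [Real.norm_of_nonneg (Real.rpow_nonneg (abs_nonneg x) p)]
  exact abs_rpow_le_bound hp x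

lemma integrable_sq_gauss : Integrable (fun x : ℝ => x ^ 2) (gaussianReal 0 1) := by
  refine (integrable_rpow_abs_gauss (p := 2) (by norm_num)).congr (ae_of_all _ fun x => ?_)
  show |x| ^ (2:ℝ) = x ^ (2:ℕ)
  rw [show (2:ℝ) = ((2:ℕ):ℝ) by norm_num, Real.rpow_natCast, sq_abs]

lemma map_sqrt_mul (v : ℝ≥0) :
    Measure.map (fun x => Real.sqrt v * x) (gaussianReal 0 1) = gaussianReal 0 v := by
  have h := gaussianReal_map_const_mul (μ := 0) (v := 1) (Real.sqrt v)
  simp only [mul_zero, mul_one] at h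
  rw [show (fun x => Real.sqrt v * x) = (fun x => Real.sqrt v * x) from rfl, h]
  congr 1
  ext
  simp [Real.sq_sqrt v.coe_nonneg]

variable {Ω : Type*} [MeasurableSpace Ω] {μ : Measure Ω} [IsProbabilityMeasure μ]

lemma integral_gauss_comp {X : Ω → ℝ} (hX : Measurable X) {v : ℝ≥0}
    (hmap : Measure.map X μ = gaussianReal 0 v) {g : ℝ → ℝ} (hg : Measurable g) :
    ∫ ω, g (X ω) ∂μ = ∫ x, g (Real.sqrt v * x) ∂(gaussianReal 0 1) := by
  calc ∫ ω, g (X ω) ∂μ = ∫ y, g y ∂(Measure.map X μ) :=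
        (integral_map hX.aemeasurable hg.aestronglyMeasurable).symm
    _ = ∫ y, g y ∂(Measure.map (fun x => Real.sqrt v * x) (gaussianReal 0 1)) := by
        rw [hmap, map_sqrt_mul]
    _ = ∫ x, g (Real.sqrt v * x) ∂(gaussianReal 0 1) :=
        integral_map (measurable_id.const_mul _).aemeasurable hg.aestronglyMeasurable

lemma integrable_gauss_comp {X : Ω → ℝ} (hX : Measurable X) {v : ℝ≥0}
    (hmap : Measure.map X μ = gaussianReal 0 v) {g : ℝ → ℝ} (hg : Measurable g) :
    Integrable (fun ω => g (X ω)) μ ↔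
      Integrable (fun x => g (Real.sqrt v * x)) (gaussianReal 0 1) := by
  have h1 : Integrable (fun ω => g (X ω)) μ ↔ Integrable g (Measure.map X μ) :=
    (integrable_map_measure (by rw [hmap]; exact hg.aestronglyMeasurable)
      hX.aemeasurable).symm
  have h2 : Integrable g (Measure.map (fun x => Real.sqrt v * x) (gaussianReal 0 1)) ↔
      Integrable (fun x => g (Real.sqrt v * x)) (gaussianReal 0 1) :=
    integrable_map_measure (by rw [map_sqrt_mul]; exact hg.aestronglyMeasurable)
      (measurable_id.const_mul _).aemeasurable
  rw [h1, hmap, ← map_sqrt_mul v, h2]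

lemma abs_exp_sub_exp_le (a b : ℝ) :
    |Real.exp a - Real.exp b| ≤ |a - b| * (Real.exp a + Real.exp b) := by
  wlog hab : b ≤ a generalizing a b
  · rw [abs_sub_comm, abs_sub_comm a b]
    have := this b a (le_of_not_ge hab)
    linarith
  have h1 : Real.exp a * (b - a + 1) ≤ Real.exp b := by
    have h := Real.add_one_le_exp (b - a)
    have := mul_le_mul_of_nonneg_left h (Real.exp_pos a).le
    rwa [← Real.exp_add, add_sub_cancel] at this
  rw [abs_of_nonneg (sub_nonneg.2 (Real.exp_le_exp.2 hab)),
    abs_of_nonneg (sub_nonneg.2 hab)]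
  nlinarith [Real.exp_pos a, Real.exp_pos b]

lemma add_rpow_le {a b p : ℝ} (ha : 0 ≤ a) (hb : 0 ≤ b) (hp : 0 ≤ p) :
    (a + b) ^ p ≤ 2 ^ p * (a ^ p + b ^ p) := by
  have h2 : (0:ℝ) ≤ 2 ^ p := Real.rpow_nonneg (by norm_num) p
  rcases le_total a b with h | h
  · calc (a + b) ^ p ≤ (2 * b) ^ p :=
          Real.rpow_le_rpow (by linarith) (by linarith) hp
      _ = 2 ^ p * b ^ p := Real.mul_rpow (by norm_num) hb
      _ ≤ 2 ^ p * (a ^ p + b ^ p) := by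
          nlinarith [Real.rpow_nonneg ha p]
  · calc (a + b) ^ p ≤ (2 * a) ^ p :=
          Real.rpow_le_rpow (by linarith) (by linarith) hp
      _ = 2 ^ p * a ^ p := Real.mul_rpow (by norm_num) ha
      _ ≤ 2 ^ p * (a ^ p + b ^ p) := by
          nlinarith [Real.rpow_nonneg hb p]

end Stmt13Aux

open Stmt13Aux

set_option maxHeartbeats 2000000 in
/-- Lemma 4 -/
theorem stmt_13 {Ω : Type*} [MeasurableSpace Ω] (μ : Measure Ω) [IsProbabilityMeasure μ]
    (L q : ℝ) (hL : 0 ≤ L) (hq : 1 ≤ q) :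
    ∃ C : ℝ, 0 < C ∧
      ∀ ξ₁ ξ₂ : Ω → ℝ, Measurable ξ₁ → Measurable ξ₂ →
        (∀ a b : ℝ, ∃ v : ℝ≥0,
          Measure.map (fun ω => a * ξ₁ ω + b * ξ₂ ω) μ = gaussianReal 0 v) →
        max (∫ ω, (ξ₁ ω) ^ 2 ∂μ) (∫ ω, (ξ₂ ω) ^ 2 ∂μ) = L →
        (∫ ω, |Real.exp (ξ₁ ω) - Real.exp (ξ₂ ω)| ^ (2 * q) ∂μ)
          ≤ C * (∫ ω, (ξ₁ ω - ξ₂ ω) ^ 2 ∂μ) ^ q := by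
  have h2q : (0:ℝ) ≤ 2 * q := by linarith
  have h4q : (0:ℝ) ≤ 4 * q := by linarith
  set N := gaussianReal 0 1 with hN
  set K := ∫ x, x ^ 2 ∂N with hKdef
  have hKpos : 0 < K := by
    rw [hKdef]
    refine (integral_pos_iff_support_of_nonneg (fun x => sq_nonneg x) integrable_sq_gauss).2 ?_
    have hsupp : (Function.support fun x : ℝ => x ^ 2) = {(0:ℝ)}ᶜ := by
      ext x; simp [Function.support, pow_eq_zero_iff]
    rw [hsupp]
    have h0 : N {(0:ℝ)} = 0 := by
      refine gaussianReal_absolutelyContinuous 0 one_ne_zero ?_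
      simp
    rw [measure_compl (measurableSet_singleton 0) (measure_ne_top _ _), h0, measure_univ]
    norm_num
  set s := 4 * q * Real.sqrt (L / K) with hsdef
  set B := ∫ x, (Real.exp (s * x) + Real.exp (-s * x)) ∂N with hBdef
  have hB0 : 0 ≤ B :=
    integral_nonneg fun x => by positivity
  set M := ∫ x, |x| ^ (4 * q) ∂N with hMdef
  have hM0 : 0 ≤ M := integral_nonneg fun x => Real.rpow_nonneg (abs_nonneg x) _
  set E := ((2:ℝ) ^ (4 * q) * (B + B)) ^ (1/2 : ℝ) with hEdef
  have hE0 : 0 ≤ E := Real.rpow_nonneg (by positivity) _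
  set C := ((M + 1) ^ (1/2 : ℝ) * E + 1) / K ^ (q:ℝ) with hCdef
  have hKq : 0 < K ^ (q:ℝ) := Real.rpow_pos_of_pos hKpos q
  have hC : 0 < C := by
    rw [hCdef]
    have : (0:ℝ) ≤ (M + 1) ^ (1/2 : ℝ) * E :=
      mul_nonneg (Real.rpow_nonneg (by linarith) _) hE0
    positivity
  refine ⟨C, hC, ?_⟩
  intro ξ₁ ξ₂ hm1 hm2 hlin hmax
  -- laws
  obtain ⟨v₁, hv₁⟩ := hlin 1 0
  simp only [one_mul, zero_mul, add_zero] at hv₁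
  obtain ⟨v₂, hv₂⟩ := hlin 0 1
  simp only [one_mul, zero_mul, zero_add] at hv₂
  obtain ⟨v, hv⟩ := hlin 1 (-1)
  simp only [one_mul, neg_one_mul, ← sub_eq_add_neg] at hv
  -- second moments
  have hXsq : ∀ (X : Ω → ℝ), Measurable X → ∀ w : ℝ≥0,
      Measure.map X μ = gaussianReal 0 w → ∫ ω, (X ω) ^ 2 ∂μ = w * K := by
    intro X hX w hmap
    rw [integral_gauss_comp hX hmap ((continuous_pow 2).measurable)]
    simp_rw [mul_pow, Real.sq_sqrt w.coe_nonneg]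
    rw [integral_const_mul]
  have h1 : ∫ ω, (ξ₁ ω) ^ 2 ∂μ = v₁ * K := hXsq ξ₁ hm1 v₁ hv₁
  have h2 : ∫ ω, (ξ₂ ω) ^ 2 ∂μ = v₂ * K := hXsq ξ₂ hm2 v₂ hv₂
  have hη : ∫ ω, (ξ₁ ω - ξ₂ ω) ^ 2 ∂μ = v * K := hXsq _ (hm1.sub hm2) v hv
  have hv₁L : (v₁:ℝ) ≤ L / K := by
    rw [le_div_iff₀ hKpos, ← h1, ← hmax]
    exact le_max_left _ _
  have hv₂L : (v₂:ℝ) ≤ L / K := by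
    rw [le_div_iff₀ hKpos, ← h2, ← hmax]
    exact le_max_right _ _
  -- mgf bound
  have hmgf : ∀ (X : Ω → ℝ), Measurable X → ∀ w : ℝ≥0, (w:ℝ) ≤ L / K →
      Measure.map X μ = gaussianReal 0 w →
      Integrable (fun ω => Real.exp (4 * q * X ω)) μ ∧
        ∫ ω, Real.exp (4 * q * X ω) ∂μ ≤ B := by
    intro X hX w hw hmap
    have hgm : Measurable fun y : ℝ => Real.exp (4 * q * y) :=
      (measurable_id.const_mul _).exp
    have hint : Integrable (fun x => Real.exp (4 * q * (Real.sqrt w * x))) N := by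
      have := integrable_exp_mul_gauss (4 * q * Real.sqrt w)
      simpa [mul_assoc] using this
    have hptw : ∀ x : ℝ, Real.exp (4 * q * (Real.sqrt w * x))
        ≤ Real.exp (s * x) + Real.exp (-s * x) := by
      intro x
      have hc0 : 0 ≤ 4 * q * Real.sqrt w := by positivity
      have hcs : 4 * q * Real.sqrt w ≤ s := by
        rw [hsdef]
        exact mul_le_mul_of_nonneg_left (Real.sqrt_le_sqrt hw) h4q
      have hs0 : 0 ≤ s := le_trans hc0 hcs
      rcases le_total 0 x with hx | hx
      · have : 4 * q * (Real.sqrt w * x) ≤ s * x := by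
          rw [← mul_assoc]
          exact mul_le_mul_of_nonneg_right hcs hx
        have := Real.exp_le_exp.2 this
        linarith [Real.exp_pos (-s * x)]
      · have : 4 * q * (Real.sqrt w * x) ≤ -s * x := by
          rw [← mul_assoc]
          nlinarith
        have := Real.exp_le_exp.2 this
        linarith [Real.exp_pos (s * x)]
    constructor
    · exact (integrable_gauss_comp hX hmap hgm).2 hint
    · rw [integral_gauss_comp hX hmap hgm]
      exact integral_mono hint (integrable_exp_add_gauss s) hptw
  obtain ⟨hi1, he1⟩ := hmgf ξ₁ hm1 v₁ hv₁L hv₁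
  obtain ⟨hi2, he2⟩ := hmgf ξ₂ hm2 v₂ hv₂L hv₂
  -- the fourth-moment of η
  have hgM : Measurable fun y : ℝ => |y| ^ (4 * q) :=
    (continuous_abs.rpow_const fun _ => Or.inr h4q).measurable
  have hscale : (fun x : ℝ => |Real.sqrt v * x| ^ (4 * q))
      = fun x => (Real.sqrt v) ^ (4 * q) * |x| ^ (4 * q) := by
    funext x
    rw [abs_mul, abs_of_nonneg (Real.sqrt_nonneg _),
      Real.mul_rpow (Real.sqrt_nonneg _) (abs_nonneg x)]
  have hηint : Integrable (fun ω => |ξ₁ ω - ξ₂ ω| ^ (4 * q)) μ := by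
    refine (integrable_gauss_comp (hm1.sub hm2) hv hgM).2 ?_
    rw [hscale]
    exact (integrable_rpow_abs_gauss h4q).const_mul _
  have hsqrt_pow : (Real.sqrt v) ^ (4 * q) = (v:ℝ) ^ (2 * q) := by
    rw [Real.sqrt_eq_rpow, ← Real.rpow_mul v.coe_nonneg]
    congr 1
    ring
  have hηval : ∫ ω, |ξ₁ ω - ξ₂ ω| ^ (4 * q) ∂μ = (v:ℝ) ^ (2 * q) * M := by
    rw [integral_gauss_comp (X := fun ω => ξ₁ ω - ξ₂ ω) (hm1.sub hm2) hv hgM, hscale, integral_const_mul, hsqrt_pow, hMdef]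
  -- define f and g
  set f : Ω → ℝ := fun ω => |ξ₁ ω - ξ₂ ω| ^ (2 * q) with hfdef
  set g : Ω → ℝ := fun ω => (Real.exp (ξ₁ ω) + Real.exp (ξ₂ ω)) ^ (2 * q) with hgdef
  have hfme : Measurable f :=
    ((continuous_abs.rpow_const fun _ => Or.inr h2q).measurable).comp (hm1.sub hm2)
  have hgme : Measurable g :=
    (Real.continuous_rpow_const h2q).measurable.comp
      ((Real.measurable_exp.comp hm1).add (Real.measurable_exp.comp hm2))
  have hf0 : ∀ ω, 0 ≤ f ω := fun ω => Real.rpow_nonneg (abs_nonneg _) _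
  have hg0 : ∀ ω, 0 ≤ g ω := fun ω =>
    Real.rpow_nonneg (by positivity) _
  have hr2 : ∀ x : ℝ, x ^ (2:ℝ) = x ^ (2:ℕ) := fun x => by
    rw [show (2:ℝ) = ((2:ℕ):ℝ) by norm_num, Real.rpow_natCast]
  have hfsq : (fun ω => f ω ^ (2:ℕ)) = fun ω => |ξ₁ ω - ξ₂ ω| ^ (4 * q) := by
    funext ω
    show (|ξ₁ ω - ξ₂ ω| ^ (2 * q)) ^ (2:ℕ) = _
    rw [← hr2, ← Real.rpow_mul (abs_nonneg _)]
    congr 1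
    ring
  have hf2int : Integrable (fun ω => f ω ^ (2:ℕ)) μ := by rw [hfsq]; exact hηint
  have hgsq_le : ∀ ω, g ω ^ (2:ℕ)
      ≤ (2:ℝ) ^ (4 * q) * (Real.exp (4 * q * ξ₁ ω) + Real.exp (4 * q * ξ₂ ω)) := by
    intro ω
    have hee : ∀ y : ℝ, Real.exp y ^ (4 * q) = Real.exp (4 * q * y) := fun y => by
      rw [← Real.exp_mul, mul_comm]
    have hgg : g ω ^ (2:ℕ) = (Real.exp (ξ₁ ω) + Real.exp (ξ₂ ω)) ^ (4 * q) := by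
      show ((Real.exp (ξ₁ ω) + Real.exp (ξ₂ ω)) ^ (2 * q)) ^ (2:ℕ) = _
      rw [← hr2, ← Real.rpow_mul (by positivity)]
      congr 1
      ring
    rw [hgg]
    calc (Real.exp (ξ₁ ω) + Real.exp (ξ₂ ω)) ^ (4 * q)
        ≤ 2 ^ (4 * q) * (Real.exp (ξ₁ ω) ^ (4 * q) + Real.exp (ξ₂ ω) ^ (4 * q)) :=
          add_rpow_le (Real.exp_pos _).le (Real.exp_pos _).le h4q
      _ = (2:ℝ) ^ (4 * q) * (Real.exp (4 * q * ξ₁ ω) + Real.exp (4 * q * ξ₂ ω)) := by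
          rw [hee, hee]
  have hg2int : Integrable (fun ω => g ω ^ (2:ℕ)) μ := by
    refine Integrable.mono' ((hi1.add hi2).const_mul ((2:ℝ) ^ (4 * q)))
      ((hgme.pow_const 2).aestronglyMeasurable) (ae_of_all _ fun ω => ?_)
    rw [Real.norm_of_nonneg (by positivity)]
    exact hgsq_le ω
  have hfmem : MemLp f 2 μ := (memLp_two_iff_integrable_sq hfme.aestronglyMeasurable).2 hf2int
  have hgmem : MemLp g 2 μ := (memLp_two_iff_integrable_sq hgme.aestronglyMeasurable).2 hg2int
  have hfg_int : Integrable (fun ω => f ω * g ω) μ := by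
    refine Integrable.mono' ((hf2int.add hg2int).div_const 2)
      ((hfme.mul hgme).aestronglyMeasurable) (ae_of_all _ fun ω => ?_)
    rw [Real.norm_of_nonneg (mul_nonneg (hf0 ω) (hg0 ω))]
    simp only [Pi.add_apply]
    nlinarith [sq_nonneg (f ω - g ω), hf0 ω, hg0 ω]
  -- step 1: pointwise bound and monotonicity
  have step1 : ∫ ω, |Real.exp (ξ₁ ω) - Real.exp (ξ₂ ω)| ^ (2 * q) ∂μ
      ≤ ∫ ω, f ω * g ω ∂μ := by
    refine integral_mono_of_nonneg (ae_of_all _ fun ω => Real.rpow_nonneg (abs_nonneg _) _)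
      hfg_int (ae_of_all _ fun ω => ?_)
    have h := abs_exp_sub_exp_le (ξ₁ ω) (ξ₂ ω)
    calc |Real.exp (ξ₁ ω) - Real.exp (ξ₂ ω)| ^ (2 * q)
        ≤ (|ξ₁ ω - ξ₂ ω| * (Real.exp (ξ₁ ω) + Real.exp (ξ₂ ω))) ^ (2 * q) :=
          Real.rpow_le_rpow (abs_nonneg _) h h2q
      _ = f ω * g ω := by
          rw [Real.mul_rpow (abs_nonneg _) (by positivity)]
  -- step 2: Cauchy-Schwarz
  have hconj : Real.HolderConjugate 2 2 := ⟨by norm_num, by norm_num, by norm_num⟩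
  have hof2 : ENNReal.ofReal (2:ℝ) = 2 := by
    rw [ENNReal.ofReal_ofNat]
  have step2 : ∫ ω, f ω * g ω ∂μ
      ≤ (∫ ω, f ω ^ (2:ℝ) ∂μ) ^ (1/2 : ℝ) * (∫ ω, g ω ^ (2:ℝ) ∂μ) ^ (1/2 : ℝ) := by
    refine integral_mul_le_Lp_mul_Lq_of_nonneg hconj (ae_of_all _ hf0) (ae_of_all _ hg0)
      ?_ ?_
    · rw [hof2]; exact hfmem
    · rw [hof2]; exact hgmem
  have hintf2 : ∫ ω, f ω ^ (2:ℝ) ∂μ = (v:ℝ) ^ (2 * q) * M := by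
    simp_rw [hr2]
    rw [hfsq] at hf2int ⊢
    · exact hηval
  have hintg2 : ∫ ω, g ω ^ (2:ℝ) ∂μ ≤ (2:ℝ) ^ (4 * q) * (B + B) := by
    simp_rw [hr2]
    calc ∫ ω, g ω ^ (2:ℕ) ∂μ
        ≤ ∫ ω, (2:ℝ) ^ (4 * q) * (Real.exp (4 * q * ξ₁ ω) + Real.exp (4 * q * ξ₂ ω)) ∂μ :=
          integral_mono hg2int ((hi1.add hi2).const_mul _) hgsq_le
      _ = (2:ℝ) ^ (4 * q) * ((∫ ω, Real.exp (4 * q * ξ₁ ω) ∂μ)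
            + ∫ ω, Real.exp (4 * q * ξ₂ ω) ∂μ) := by
          rw [integral_const_mul, integral_add hi1 hi2]
      _ ≤ (2:ℝ) ^ (4 * q) * (B + B) := by
          have h2p : (0:ℝ) ≤ (2:ℝ) ^ (4 * q) := Real.rpow_nonneg (by norm_num) _
          nlinarith
  -- assemble
  have hg2nonneg : 0 ≤ ∫ ω, g ω ^ (2:ℝ) ∂μ :=
    integral_nonneg fun ω => Real.rpow_nonneg (hg0 ω) _
  have bound1 : (∫ ω, f ω ^ (2:ℝ) ∂μ) ^ (1/2 : ℝ) ≤ (v:ℝ) ^ (q:ℝ) * (M + 1) ^ (1/2 : ℝ) := by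
    rw [hintf2]
    have hle : (v:ℝ) ^ (2 * q) * M ≤ (v:ℝ) ^ (2 * q) * (M + 1) :=
      mul_le_mul_of_nonneg_left (by linarith) (Real.rpow_nonneg v.coe_nonneg _)
    calc ((v:ℝ) ^ (2 * q) * M) ^ (1/2 : ℝ)
        ≤ ((v:ℝ) ^ (2 * q) * (M + 1)) ^ (1/2 : ℝ) :=
          Real.rpow_le_rpow (mul_nonneg (Real.rpow_nonneg v.coe_nonneg _) hM0) hle
            (by norm_num)
      _ = ((v:ℝ) ^ (2 * q)) ^ (1/2 : ℝ) * (M + 1) ^ (1/2 : ℝ) :=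
          Real.mul_rpow (Real.rpow_nonneg v.coe_nonneg _) (by linarith)
      _ = (v:ℝ) ^ (q:ℝ) * (M + 1) ^ (1/2 : ℝ) := by
          rw [← Real.rpow_mul v.coe_nonneg, show 2 * q * (1/2:ℝ) = q by ring]
  have bound2 : (∫ ω, g ω ^ (2:ℝ) ∂μ) ^ (1/2 : ℝ) ≤ E := by
    rw [hEdef]
    exact Real.rpow_le_rpow hg2nonneg hintg2 (by norm_num)
  have step3 : ∫ ω, |Real.exp (ξ₁ ω) - Real.exp (ξ₂ ω)| ^ (2 * q) ∂μ
      ≤ (v:ℝ) ^ (q:ℝ) * ((M + 1) ^ (1/2 : ℝ) * E) := by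
    have hA0 : 0 ≤ (∫ ω, f ω ^ (2:ℝ) ∂μ) ^ (1/2 : ℝ) := by
      apply Real.rpow_nonneg
      exact integral_nonneg fun ω => Real.rpow_nonneg (hf0 ω) _
    calc ∫ ω, |Real.exp (ξ₁ ω) - Real.exp (ξ₂ ω)| ^ (2 * q) ∂μ
        ≤ (∫ ω, f ω ^ (2:ℝ) ∂μ) ^ (1/2 : ℝ) * (∫ ω, g ω ^ (2:ℝ) ∂μ) ^ (1/2 : ℝ) :=
          le_trans step1 step2
      _ ≤ ((v:ℝ) ^ (q:ℝ) * (M + 1) ^ (1/2 : ℝ)) * E := by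
          refine mul_le_mul bound1 bound2 (Real.rpow_nonneg hg2nonneg _) ?_
          exact mul_nonneg (Real.rpow_nonneg v.coe_nonneg _)
            (Real.rpow_nonneg (by linarith) _)
      _ = (v:ℝ) ^ (q:ℝ) * ((M + 1) ^ (1/2 : ℝ) * E) := by ring
  -- final
  rw [hη]
  have hvq0 : 0 ≤ (v:ℝ) ^ (q:ℝ) := Real.rpow_nonneg v.coe_nonneg _
  have hrhs : C * ((v:ℝ) * K) ^ (q:ℝ)
      = ((M + 1) ^ (1/2 : ℝ) * E + 1) * (v:ℝ) ^ (q:ℝ) := by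
    rw [Real.mul_rpow v.coe_nonneg hKpos.le, hCdef]
    field_simp
  rw [hrhs]
  calc ∫ ω, |Real.exp (ξ₁ ω) - Real.exp (ξ₂ ω)| ^ (2 * q) ∂μ
      ≤ (v:ℝ) ^ (q:ℝ) * ((M + 1) ^ (1/2 : ℝ) * E) := step3
    _ ≤ ((M + 1) ^ (1/2 : ℝ) * E + 1) * (v:ℝ) ^ (q:ℝ) := by
        nlinarith [hvq0, mul_nonneg (Real.rpow_nonneg (show (0:ℝ) ≤ M + 1 by linarith) (1/2:ℝ)) hE0]
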